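/- Let z ∈ ℂ, let k be a positive integer with k ≥ e·|z|, and let λ(k) ∈ ℤ with m_k = k + ⌈max(0, log|λ(k)|)⌉. Then |Log E_{m_k}(z/k)| ≤ (3/2)·e^{−(m_k+1)}, and consequently |λ(k)|·|Log E_{m_k}(z/k)| ≤ (3/2)·e^{−(k+1)}. -/

import Mathlib

/-- The Weierstrass factor `E_m(z) = (1 - z) * exp(∑_{j=1}^m z^j / j)`. -/
noncomputable def weierstrassFactor (m : ℕ) (z : ℂ) : ℂ :=
  (1 - z) * Complex.exp (∑ j ∈ Finset.Icc 1 m, z ^ j / j)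

lemma weierstrassFactor_eq_exp (m : ℕ) (w : ℂ) (hw : ‖w‖ < 1) :
    weierstrassFactor m w =
      Complex.exp (Complex.log (1 - w) + ∑ j ∈ Finset.Icc 1 m, w ^ j / j) := by
  have h1 : (1 : ℂ) - w ≠ 0 := by
    intro h
    have : ‖(1 : ℂ) - w‖ = 0 := by rw [h, norm_zero]
    have h2 : (1 : ℝ) - ‖w‖ ≤ ‖(1 : ℂ) - w‖ := by
      have := norm_sub_norm_le (1 : ℂ) w
      simpa using this
    rw [this] at h2; linarith
  rw [weierstrassFactor, Complex.exp_add, Complex.exp_log h1]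

lemma norm_log_weierstrassFactor_le (m : ℕ) (hm : 1 ≤ m) (w : ℂ)
    (hw : ‖w‖ ≤ (Real.exp 1)⁻¹) :
    ‖Complex.log (weierstrassFactor m w)‖ ≤ (3 / 2) * Real.exp (-((m : ℝ) + 1)) := by
  have he2 : (2 : ℝ) < Real.exp 1 := by
    have := Real.exp_one_gt_d9; linarith
  have hw1 : ‖w‖ < 1 := lt_of_le_of_lt hw (by
    rw [inv_lt_one_iff₀]; right; linarith)
  set S : ℂ := ∑ j ∈ Finset.Icc 1 m, w ^ j / j with hS
  have hsum := Complex.hasSum_taylorSeries_neg_log hw1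
  -- sum over range (m+1) equals S
  have hrange : ∑ n ∈ Finset.range (m + 1), w ^ n / (n : ℂ) = S := by
    have : Finset.range (m + 1) = insert 0 (Finset.Icc 1 m) := by
      ext n; simp [Nat.lt_succ_iff]; omega
    rw [this, Finset.sum_insert (by simp)]
    simp [hS]
  -- tail has sum -log(1-w) - S
  have htail : HasSum (fun n : ℕ => w ^ (n + (m + 1)) / ((n : ℂ) + (m + 1)))
      (-Complex.log (1 - w) - S) := by
    have h2 := (hasSum_nat_add_iff' (f := fun n : ℕ => w ^ n / (n : ℂ)) (m + 1)).mpr hsum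
    rw [hrange] at h2
    convert h2 using 2 with n
    · rfl
    push_cast; ring_nf
  set ζ : ℂ := Complex.log (1 - w) + S with hζ
  have hζeq : ζ = -(-Complex.log (1 - w) - S) := by ring
  -- norm bound on the tail
  set C : ℝ := ‖w‖ ^ (m + 1) / (m + 1) with hC
  have hbound : ∀ n : ℕ, ‖w ^ (n + (m + 1)) / ((n : ℂ) + (m + 1))‖ ≤ ‖w‖ ^ n * C := by
    intro n
    rw [norm_div, norm_pow]
    have hden : ((m : ℝ) + 1) ≤ ‖(n : ℂ) + (m + 1)‖ := by
      have : ((n : ℂ) + (m + 1)) = ((n + (m + 1) : ℕ) : ℂ) := by push_cast; ring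
      rw [this, Complex.norm_natCast]
      push_cast; linarith [Nat.cast_nonneg (α := ℝ) n]
    have hpos : (0 : ℝ) < (m : ℝ) + 1 := by positivity
    calc ‖w‖ ^ (n + (m + 1)) / ‖(n : ℂ) + (m + 1)‖
        ≤ ‖w‖ ^ (n + (m + 1)) / ((m : ℝ) + 1) := by
          apply div_le_div_of_nonneg_left (by positivity) hpos hden
      _ = ‖w‖ ^ n * C := by rw [pow_add, hC]; ring
  have hgeo : HasSum (fun n : ℕ => ‖w‖ ^ n * C) ((1 - ‖w‖)⁻¹ * C) :=
    (hasSum_geometric_of_lt_one (norm_nonneg w) hw1).mul_right C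
  have hsummable : Summable (fun n : ℕ => ‖w ^ (n + (m + 1)) / ((n : ℂ) + (m + 1))‖) :=
    Summable.of_nonneg_of_le (fun n => norm_nonneg _) hbound hgeo.summable
  have hnormζ : ‖ζ‖ ≤ (1 - ‖w‖)⁻¹ * C := by
    rw [hζeq, norm_neg, ← htail.tsum_eq]
    calc ‖∑' n : ℕ, w ^ (n + (m + 1)) / ((n : ℂ) + (m + 1))‖
        ≤ ∑' n : ℕ, ‖w ^ (n + (m + 1)) / ((n : ℂ) + (m + 1))‖ :=
          norm_tsum_le_tsum_norm hsummable
      _ ≤ ∑' n : ℕ, ‖w‖ ^ n * C := Summable.tsum_le_tsum hbound hsummable hgeo.summable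
      _ = (1 - ‖w‖)⁻¹ * C := hgeo.tsum_eq
  -- numeric bound
  have hwnn : (0 : ℝ) ≤ ‖w‖ := norm_nonneg w
  have hCle : C ≤ Real.exp (-((m : ℝ) + 1)) / 2 := by
    rw [hC]
    have h1 : ‖w‖ ^ (m + 1) ≤ ((Real.exp 1)⁻¹) ^ (m + 1) := pow_le_pow_left₀ hwnn hw _
    have h2 : ((Real.exp 1)⁻¹) ^ (m + 1) = Real.exp (-((m : ℝ) + 1)) := by
      rw [← Real.exp_neg, ← Real.exp_nat_mul]
      congr 1; push_cast; ring
    have h3 : (2 : ℝ) ≤ (m : ℝ) + 1 := by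
      have : (1 : ℝ) ≤ (m : ℝ) := by exact_mod_cast hm
      linarith
    exact div_le_div₀ (Real.exp_pos _).le (h1.trans h2.le) (by norm_num) h3
  have hinv : (1 - ‖w‖)⁻¹ ≤ 2 := by
    have h1 : (Real.exp 1)⁻¹ ≤ 1 / 2 := by
      rw [inv_le_iff_one_le_mul₀ (by positivity)]; linarith
    have h2 : (1 : ℝ) / 2 ≤ 1 - ‖w‖ := by
      have := hw.trans h1; linarith
    calc (1 - ‖w‖)⁻¹ ≤ (1 / 2 : ℝ)⁻¹ := by
          apply inv_anti₀ (by norm_num) h2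
      _ = 2 := by norm_num
  have hfinal : ‖ζ‖ ≤ (3 / 2) * Real.exp (-((m : ℝ) + 1)) := by
    have hCnn : (0 : ℝ) ≤ C := by rw [hC]; positivity
    have : (1 - ‖w‖)⁻¹ * C ≤ 2 * (Real.exp (-((m : ℝ) + 1)) / 2) := by
      apply mul_le_mul hinv hCle hCnn (by norm_num)
    nlinarith [Real.exp_pos (-((m : ℝ) + 1))]
  -- conclude: log of exp
  have hEπ : Complex.log (weierstrassFactor m w) = ζ := by
    rw [weierstrassFactor_eq_exp m w hw1, ← hζ]
    apply Complex.log_exp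
    · have h1 : |ζ.im| ≤ ‖ζ‖ := Complex.abs_im_le_norm ζ
      have h2 : ‖ζ‖ < Real.pi := by
        have : Real.exp (-((m : ℝ) + 1)) ≤ 1 := by
          rw [Real.exp_le_one_iff]; push_cast; linarith [Nat.cast_nonneg (α := ℝ) m]
        nlinarith [Real.pi_gt_three]
      have := abs_le.mp h1
      linarith [this.1]
    · have h1 : |ζ.im| ≤ ‖ζ‖ := Complex.abs_im_le_norm ζ
      have h2 : ‖ζ‖ < Real.pi := by
        have : Real.exp (-((m : ℝ) + 1)) ≤ 1 := by
          rw [Real.exp_le_one_iff]; push_cast; linarith [Nat.cast_nonneg (α := ℝ) m]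
        nlinarith [Real.pi_gt_three]
      have := abs_le.mp h1
      linarith [this.2]
  rw [hEπ]; exact hfinal

theorem log_weierstrassFactor_bound (z : ℂ) (k : ℕ) (hk : 1 ≤ k)
    (hke : Real.exp 1 * ‖z‖ ≤ k) (l : ℤ) :
    ‖Complex.log (weierstrassFactor (k + ⌈max 0 (Real.log |(l : ℝ)|)⌉₊) (z / k))‖ ≤
      (3 / 2) * Real.exp (-(((k + ⌈max 0 (Real.log |(l : ℝ)|)⌉₊ : ℕ) : ℝ) + 1)) ∧
    |(l : ℝ)| * ‖Complex.log (weierstrassFactor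
        (k + ⌈max 0 (Real.log |(l : ℝ)|)⌉₊) (z / k))‖ ≤
      (3 / 2) * Real.exp (-((k : ℝ) + 1)) := by
  set c : ℕ := ⌈max 0 (Real.log |(l : ℝ)|)⌉₊ with hc
  set m : ℕ := k + c with hm
  have hk0 : (0 : ℝ) < k := by exact_mod_cast hk
  have hw : ‖z / (k : ℂ)‖ ≤ (Real.exp 1)⁻¹ := by
    rw [norm_div, Complex.norm_natCast, div_le_iff₀ hk0,
      inv_mul_eq_div, le_div_iff₀ (Real.exp_pos 1)]
    calc ‖z‖ * Real.exp 1 = Real.exp 1 * ‖z‖ := by ring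
      _ ≤ k := hke
  have hm1 : 1 ≤ m := le_trans hk (Nat.le_add_right k c)
  have h1 := norm_log_weierstrassFactor_le m hm1 (z / k) hw
  refine ⟨h1, ?_⟩
  have hlabs : |(l : ℝ)| ≤ Real.exp c := by
    rcases eq_or_ne l 0 with rfl | hl
    · simp [le_of_lt (Real.exp_pos _)]
    · have hpos : (0 : ℝ) < |(l : ℝ)| := by
        simp only [abs_pos]; exact_mod_cast hl
      rw [← Real.exp_log hpos]
      apply Real.exp_le_exp.mpr
      calc Real.log |(l : ℝ)| ≤ max 0 (Real.log |(l : ℝ)|) := le_max_right _ _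
        _ ≤ (c : ℝ) := Nat.le_ceil _
  calc |(l : ℝ)| * ‖Complex.log (weierstrassFactor m (z / k))‖
      ≤ Real.exp c * ((3 / 2) * Real.exp (-((m : ℝ) + 1))) :=
        mul_le_mul hlabs h1 (norm_nonneg _) (le_of_lt (Real.exp_pos _))
    _ = (3 / 2) * Real.exp (-((k : ℝ) + 1)) := by
        rw [mul_comm, mul_assoc, ← Real.exp_add]
        congr 2
        rw [hm]; push_cast; ring
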